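/- Let X be a finite set of at least 2 points in general position and x a vertex of the convex hull of X. Then there exists an ordering of X starting at x whose straight-line path is non-self-intersecting; moreover, the path can be chosen so that its final point is any prescribed point y ∈ X \ {x}. -/

import Mathlib

open scoped Classical

noncomputable section

abbrev Pt : Type := ℝ × ℝ

/-- Signed value of `z` with respect to the line `a x + b y + c = 0`. -/
def sideVal (a b c : ℝ) (z : Pt) : ℝ := a * z.1 + b * z.2 + c

/-- The segment `[u,v]` crosses the line: endpoints strictly on opposite sides. -/
def crossesLine (a b c : ℝ) (u v : Pt) : Prop := sideVal a b c u * sideVal a b c v < 0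

/-- Planar determinant of two vectors. -/
def det2 (u v : Pt) : ℝ := u.1 * v.2 - u.2 * v.1

/-- `w` lies in the closed convex cone spanned by `u` and `v`. -/
def memCone (u v w : Pt) : Prop := ∃ s t : ℝ, 0 ≤ s ∧ 0 ≤ t ∧ w = s • u + t • v

/-- No three points of `X` are collinear. -/
def GenPos (X : Finset Pt) : Prop :=
  ∀ x ∈ X, ∀ y ∈ X, ∀ z ∈ X, x ≠ y → x ≠ z → y ≠ z → ¬ Collinear ℝ ({x, y, z} : Set Pt)

/-- Edges of a straight-line path visiting the points of `l` in order. -/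
def pathEdges (l : List Pt) : List (Pt × Pt) := l.zip l.tail

def segOf (e : Pt × Pt) : Set Pt := segment ℝ e.1 e.2

/-- Non-adjacent edges are disjoint; adjacent edges meet only at the shared vertex. -/
def NonSelfIntersecting (l : List Pt) : Prop :=
  (∀ i j, ∀ hi : i < (pathEdges l).length, ∀ hj : j < (pathEdges l).length, i + 1 < j →
    segOf ((pathEdges l).get ⟨i, hi⟩) ∩ segOf ((pathEdges l).get ⟨j, hj⟩) = ∅) ∧
  (∀ i, ∀ hi : i < (pathEdges l).length, ∀ hj : i + 1 < (pathEdges l).length,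
    segOf ((pathEdges l).get ⟨i, hi⟩) ∩ segOf ((pathEdges l).get ⟨i + 1, hj⟩)
      = {((pathEdges l).get ⟨i + 1, hj⟩).1})

/-- Number of edges of the path crossing the line `a x + b y + c = 0`. -/
def crossCount (a b c : ℝ) (l : List Pt) : ℕ :=
  ((pathEdges l).filter (fun e => decide (crossesLine a b c e.1 e.2))).length

/-- The `i`-th edge of the cycle on the points of `l` (indices mod `l.length`). -/
def cEdge (l : List Pt) (i : ℕ) (hi : i < l.length) : Set Pt :=
  segment ℝ (l.get ⟨i, hi⟩)
    (l.get ⟨(i + 1) % l.length, Nat.mod_lt _ (Nat.lt_of_le_of_lt (Nat.zero_le i) hi)⟩)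

/-- Simple polygon condition for the cycle through `l`. -/
def CycleNSI (l : List Pt) : Prop :=
  ∀ i j, ∀ hi : i < l.length, ∀ hj : j < l.length, i ≠ j →
    ((i + 1) % l.length = j → cEdge l i hi ∩ cEdge l j hj = {l.get ⟨j, hj⟩}) ∧
    ((j + 1) % l.length = i → cEdge l i hi ∩ cEdge l j hj = {l.get ⟨i, hi⟩}) ∧
    ((i + 1) % l.length ≠ j → (j + 1) % l.length ≠ i → cEdge l i hi ∩ cEdge l j hj = ∅)

/-- Number of edges of the cycle on `l` crossing the line. -/
def cycleCrossCount (a b c : ℝ) (l : List Pt) : ℕ :=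
  (Finset.univ.filter (fun i : Fin l.length =>
    crossesLine a b c (l.get i)
      (l.get ⟨(i.1 + 1) % l.length,
        Nat.mod_lt _ (Nat.lt_of_le_of_lt (Nat.zero_le i.1) i.2)⟩))).card

/-! ### Auxiliary lemmas -/

lemma det2_self' (u : Pt) : det2 u u = 0 := by simp [det2]; ring

lemma det2_swap' (u v : Pt) : det2 u v = -det2 v u := by simp [det2]; ring

lemma det2_combo (w c : Pt) {s t : ℝ} (h : s + t = 1) (u v : Pt) :
    det2 w ((s • u + t • v) - c) = s * det2 w (u - c) + t * det2 w (v - c) := by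
  have ht : t = 1 - s := by linarith
  subst ht
  simp [det2, Prod.fst_add, Prod.snd_add, Prod.smul_fst, Prod.smul_snd, smul_eq_mul]
  ring

lemma collinear_of_det2 {x p q : Pt} (hpx : p ≠ x) (h : det2 (p - x) (q - x) = 0) :
    Collinear ℝ ({x, p, q} : Set Pt) := by
  have hx : x ∈ ({x, p, q} : Set Pt) := by simp
  rw [collinear_iff_of_mem hx]
  refine ⟨p - x, ?_⟩
  have hu : p - x ≠ 0 := sub_ne_zero.mpr hpx
  have hdep : ∃ r : ℝ, q - x = r • (p - x) := by
    set u : Pt := p - x with hu'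
    set w : Pt := q - x with hw'
    have hdet : u.1 * w.2 - u.2 * w.1 = 0 := h
    by_cases h1 : u.1 = 0
    · have h2 : u.2 ≠ 0 := by
        intro h2; apply hu; apply Prod.ext <;> simp [h1, h2]
      have hw1 : w.1 = 0 := by
        have hz : u.2 * w.1 = 0 := by rw [h1] at hdet; linarith
        rcases mul_eq_zero.mp hz with h | h
        · exact absurd h h2
        · exact h
      refine ⟨w.2 / u.2, ?_⟩
      rw [Prod.ext_iff]
      constructor
      · simp [Prod.smul_fst, smul_eq_mul, hw1, h1]
      · simp [Prod.smul_snd, smul_eq_mul]; field_simp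
    · refine ⟨w.1 / u.1, ?_⟩
      rw [Prod.ext_iff]
      constructor
      · simp [Prod.smul_fst, smul_eq_mul]; field_simp
      · simp [Prod.smul_snd, smul_eq_mul]; field_simp; nlinarith [hdet]
  obtain ⟨r, hr⟩ := hdep
  intro z hz
  rcases hz with rfl | rfl | rfl
  · exact ⟨0, by simp⟩
  · exact ⟨1, by simp [vadd_eq_add]⟩
  · exact ⟨r, by rw [← hr]; simp [vadd_eq_add]⟩

lemma pathEdges_length (l : List Pt) : (pathEdges l).length = l.length - 1 := by
  simp [pathEdges]

lemma pathEdges_get (l : List Pt) (i : ℕ) (hi : i < (pathEdges l).length) :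
    ((pathEdges l).get ⟨i, hi⟩).1 = l[i]'(by simp [pathEdges_length] at hi; omega) ∧
    ((pathEdges l).get ⟨i, hi⟩).2 = l[i+1]'(by simp [pathEdges_length] at hi; omega) := by
  have h1 : i < l.tail.length := by simp [pathEdges_length] at hi ⊢; omega
  simp [pathEdges, List.get_eq_getElem, List.getElem_zip, List.getElem_tail]

lemma genpos_mono {X Y : Finset Pt} (h : Y ⊆ X) (hgp : GenPos X) : GenPos Y :=
  fun a ha b hb c hc => hgp a (h ha) b (h hb) c (h hc)

lemma convex_pos_combo {a b fa fb : ℝ} (ha : 0 ≤ a) (hb : 0 ≤ b) (hab : a + b = 1)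
    (hfa : 0 < fa) (hfb : 0 < fb) : 0 < a * fa + b * fb := by
  rcases ha.eq_or_lt with h | h
  · have hb1 : b = 1 := by linarith
    rw [← h, hb1]
    simpa using hfb
  · have h1 : 0 < a * fa := mul_pos h hfa
    have h2 : 0 ≤ b * fb := mul_nonneg hb hfb.le
    linarith

lemma exists_hull_nbrs (X : Finset Pt) (hgp : GenPos X) (x : Pt) (hx : x ∈ X)
    (hvert : x ∉ convexHull ℝ ((X.erase x : Finset Pt) : Set Pt))
    (hcard : 2 ≤ (X.erase x).card) :
    ∃ z₁ z₂ : Pt, z₁ ∈ X.erase x ∧ z₂ ∈ X.erase x ∧ z₁ ≠ z₂ ∧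
      (∀ q ∈ X.erase x, q ≠ z₁ → 0 < det2 (z₁ - x) (q - x)) ∧
      (∀ q ∈ X.erase x, q ≠ z₂ → det2 (z₂ - x) (q - x) < 0) := by
  obtain ⟨f, u, hfx, hfb⟩ := geometric_hahn_banach_point_closed
    (convex_convexHull ℝ _) ((X.erase x).finite_toSet.isCompact_convexHull ℝ).isClosed hvert
  set a := f (1, 0) with ha
  set b := f (0, 1) with hb
  have hf : ∀ p : Pt, f p = a * p.1 + b * p.2 := by
    intro p
    have hp : (p : Pt) = p.1 • ((1:ℝ), (0:ℝ)) + p.2 • ((0:ℝ), (1:ℝ)) := by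
      rw [Prod.ext_iff]; simp
    rw [hp, map_add, map_smul, map_smul, smul_eq_mul, smul_eq_mul, ← ha, ← hb, hp]
    simp; ring
  set g : Pt → ℝ := fun p => a * (p.1 - x.1) + b * (p.2 - x.2) with hgdef
  have hg : ∀ p ∈ X.erase x, 0 < g p := by
    intro p hp
    have h1 : f x < f p := lt_trans hfx (hfb p (subset_convexHull ℝ _ (by exact_mod_cast hp)))
    rw [hf, hf] at h1
    simp only [hgdef]; linarith
  set num : Pt → ℝ := fun p => -b * (p.1 - x.1) + a * (p.2 - x.2) with hnumdef
  set sl : Pt → ℝ := fun p => num p / g p with hsldef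
  have hab : 0 < a ^ 2 + b ^ 2 := by
    obtain ⟨p, hp⟩ := Finset.card_pos.mp (by omega : 0 < (X.erase x).card)
    have hgp' := hg p hp
    rcases eq_or_ne a 0 with h0 | h0
    · rcases eq_or_ne b 0 with h1 | h1
      · simp only [hgdef, h0, h1] at hgp'; norm_num at hgp'
      · have := mul_self_pos.mpr h1; nlinarith
    · have := mul_self_pos.mpr h0; nlinarith
  have key : ∀ p ∈ X.erase x, ∀ q ∈ X.erase x, (sl p < sl q ↔ 0 < det2 (p - x) (q - x)) := by
    intro p hp q hq
    have hid : num q * g p - num p * g q = (a ^ 2 + b ^ 2) * det2 (p - x) (q - x) := by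
      simp only [hnumdef, hgdef, det2, Prod.fst_sub, Prod.snd_sub]; ring
    rw [hsldef]
    simp only []
    rw [div_lt_div_iff₀ (hg p hp) (hg q hq)]
    constructor
    · intro h; nlinarith
    · intro h; nlinarith
  have hne : ∀ p ∈ X.erase x, ∀ q ∈ X.erase x, p ≠ q → det2 (p - x) (q - x) ≠ 0 := by
    intro p hp q hq hpq h0
    obtain ⟨hpx, hpX⟩ := Finset.mem_erase.mp hp
    obtain ⟨hqx, hqX⟩ := Finset.mem_erase.mp hq
    exact hgp x hx p hpX q hqX (Ne.symm hpx) (Ne.symm hqx) hpq (collinear_of_det2 hpx h0)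
  have hnonempty : (X.erase x).Nonempty := Finset.card_pos.mp (by omega)
  obtain ⟨z₁, hz₁, hmin⟩ := Finset.exists_min_image (X.erase x) sl hnonempty
  obtain ⟨z₂, hz₂, hmax⟩ := Finset.exists_max_image (X.erase x) sl hnonempty
  have prop1 : ∀ q ∈ X.erase x, q ≠ z₁ → 0 < det2 (z₁ - x) (q - x) := by
    intro q hq hqz
    have hd := hne z₁ hz₁ q hq (Ne.symm hqz)
    rcases lt_or_gt_of_ne hd with h | h
    · exfalso
      have h2 : 0 < det2 (q - x) (z₁ - x) := by rw [det2_swap'] at h; linarith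
      have := (key q hq z₁ hz₁).mpr h2
      exact absurd this (not_lt.mpr (hmin q hq))
    · exact h
  have prop2 : ∀ q ∈ X.erase x, q ≠ z₂ → det2 (z₂ - x) (q - x) < 0 := by
    intro q hq hqz
    have hd := hne z₂ hz₂ q hq (Ne.symm hqz)
    rcases lt_or_gt_of_ne hd with h | h
    · exact h
    · exfalso
      have := (key z₂ hz₂ q hq).mpr h
      exact absurd this (not_lt.mpr (hmax q hq))
  have hz12 : z₁ ≠ z₂ := by
    obtain ⟨q, hq, hqz⟩ := Finset.exists_mem_ne (s := X.erase x) (by omega) z₁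
    intro he
    have h1 : 0 < det2 (z₁ - x) (q - x) := prop1 q hq hqz
    have h2 : det2 (z₂ - x) (q - x) < 0 := prop2 q hq (by rw [← he]; exact hqz)
    rw [← he] at h2; linarith
  exact ⟨z₁, z₂, hz₁, hz₂, hz12, prop1, prop2⟩

lemma main_path : ∀ n : ℕ, ∀ X : Finset Pt, X.card = n → 2 ≤ X.card → GenPos X →
    ∀ x, x ∈ X → x ∉ convexHull ℝ ((X.erase x : Finset Pt) : Set Pt) →
    ∀ y, y ∈ X → y ≠ x →
    ∃ l : List Pt, l.Nodup ∧ l.toFinset = X ∧ l.head? = some x ∧ l.getLast? = some y ∧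
      NonSelfIntersecting l := by
  intro n
  induction n using Nat.strong_induction_on with
  | _ n ih =>
  intro X hn hX hgp x hx hvert y hy hxy
  rcases eq_or_lt_of_le hX with h2 | h3
  · -- base case : |X| = 2
    have hXeq : X = ({x, y} : Finset Pt) := by
      apply (Finset.eq_of_subset_of_card_le _ _).symm
      · intro p hp
        rcases Finset.mem_insert.mp hp with rfl | hp
        · exact hx
        · rw [Finset.mem_singleton.mp hp]; exact hy
      · rw [← h2, Finset.card_insert_of_notMem (by simp [Ne.symm hxy]),
          Finset.card_singleton]
    refine ⟨[x, y], by simp [Ne.symm hxy], by simp [hXeq], rfl, rfl, ?_, ?_⟩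
    · intro i j hi hj hij
      rw [pathEdges_length] at hj
      simp at hj
      omega
    · intro i hi hj
      rw [pathEdges_length] at hj
      simp at hj
  · -- inductive step : |X| ≥ 3
    have hn3 : 3 ≤ n := by omega
    have hcard' : (X.erase x).card = n - 1 := by rw [Finset.card_erase_of_mem hx, hn]
    have hcard2 : 2 ≤ (X.erase x).card := by omega
    obtain ⟨z₁, z₂, hz₁, hz₂, h12, hp1, hp2⟩ := exists_hull_nbrs X hgp x hx hvert hcard2
    obtain ⟨z, hzm, hzy, ε, hside⟩ :
        ∃ z, z ∈ X.erase x ∧ z ≠ y ∧ ∃ ε : ℝ,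
          ∀ q ∈ X.erase x, q ≠ z → 0 < ε * det2 (z - x) (q - x) := by
      rcases eq_or_ne z₁ y with rfl | h1y
      · exact ⟨z₂, hz₂, Ne.symm h12, -1, fun q hq hqz => by
          have := hp2 q hq hqz; linarith⟩
      · exact ⟨z₁, hz₁, h1y, 1, fun q hq hqz => by
          have := hp1 q hq hqz; linarith⟩
    set F : Pt → ℝ := fun p => ε * det2 (z - x) (p - x) with hFdef
    obtain ⟨hzx, hzX⟩ := Finset.mem_erase.mp hzm
    have hFx : F x = 0 := by simp [hFdef, det2]
    have hFz : F z = 0 := by simp [hFdef, det2_self']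
    have hFq : ∀ q ∈ X, q ≠ x → q ≠ z → 0 < F q := by
      intro q hq hq1 hq2
      exact hside q (Finset.mem_erase.mpr ⟨hq1, hq⟩) hq2
    have hFcombo : ∀ (u v : Pt) (sa sb : ℝ), sa + sb = 1 →
        F (sa • u + sb • v) = sa * F u + sb * F v := by
      intro u v sa sb h
      simp only [hFdef]
      rw [det2_combo _ _ h]
      ring
    -- z is a hull vertex of X.erase x
    have hvert' : z ∉ convexHull ℝ (((X.erase x).erase z : Finset Pt) : Set Pt) := by
      intro hmem
      have hCC : Convex ℝ {p : Pt | 0 < F p} := by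
        intro u hu v hv sa sb hsa hsb hsab
        show 0 < F (sa • u + sb • v)
        rw [hFcombo u v sa sb hsab]
        exact convex_pos_combo hsa hsb hsab hu hv
      have hsub : (((X.erase x).erase z : Finset Pt) : Set Pt) ⊆ {p : Pt | 0 < F p} := by
        intro q hq
        rw [Finset.mem_coe, Finset.mem_erase, Finset.mem_erase] at hq
        exact hFq q hq.2.2 hq.2.1 hq.1
      have := convexHull_min hsub hCC hmem
      simp only [Set.mem_setOf_eq, hFz] at this
      exact lt_irrefl 0 this
    have hyX' : y ∈ X.erase x := Finset.mem_erase.mpr ⟨hxy, hy⟩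
    obtain ⟨l', hnd', htf', hhd', hlast', hNSI'⟩ :=
      ih (n - 1) (by omega) (X.erase x) hcard' (by omega) (genpos_mono (Finset.erase_subset _ _) hgp)
        z hzm hvert' y hyX' (Ne.symm hzy)
    obtain ⟨t, rfl⟩ : ∃ t, l' = z :: t := by
      cases l' with
      | nil => simp at hhd'
      | cons a t =>
        simp only [List.head?_cons, Option.some_inj] at hhd'
        exact ⟨t, by rw [hhd']⟩
    have hznott : z ∉ t := (List.nodup_cons.mp hnd').1
    have hxnotl' : x ∉ (z :: t) := by
      intro hmem
      have : x ∈ X.erase x := htf' ▸ List.mem_toFinset.mpr hmem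
      exact absurd this (Finset.notMem_erase x X)
    -- facts about elements of t
    have hFt : ∀ p ∈ t, 0 < F p := by
      intro p hp
      have hpl' : p ∈ (z :: t) := List.mem_cons_of_mem _ hp
      have hpX' : p ∈ X.erase x := htf' ▸ List.mem_toFinset.mpr hpl'
      obtain ⟨hpx, hpX⟩ := Finset.mem_erase.mp hpX'
      exact hFq p hpX hpx (fun h => hznott (h ▸ hp))
    set l : List Pt := x :: z :: t with hldef
    have hcons : pathEdges l = (x, z) :: pathEdges (z :: t) := rfl
    have hlen : (pathEdges l).length = (pathEdges (z :: t)).length + 1 := by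
      simp [pathEdges_length, hldef]
    have hgetS : ∀ (i : ℕ) (h : i + 1 < (pathEdges l).length),
        (pathEdges l).get ⟨i + 1, h⟩
          = (pathEdges (z :: t)).get ⟨i, by omega⟩ := by
      intro i h
      simp only [hcons, List.get_eq_getElem, List.getElem_cons_succ]
    have hget0 : ∀ (h : 0 < (pathEdges l).length),
        (pathEdges l).get ⟨0, h⟩ = (x, z) := by
      intro h; rfl
    -- membership of edge endpoints of pathEdges (z::t) in t for indices ≥ 1
    have hend : ∀ (j : ℕ) (hj : j < (pathEdges (z :: t)).length),
        ((pathEdges (z :: t)).get ⟨j, hj⟩).2 ∈ t ∧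
        (1 ≤ j → ((pathEdges (z :: t)).get ⟨j, hj⟩).1 ∈ t) := by
      intro j hj
      obtain ⟨he1, he2⟩ := pathEdges_get (z :: t) j hj
      have hjt : j < t.length := by rw [pathEdges_length] at hj; simpa using hj
      constructor
      · rw [he2]
        simp only [List.getElem_cons_succ]
        exact List.getElem_mem _
      · intro h1
        obtain ⟨k, rfl⟩ : ∃ k, j = k + 1 := ⟨j - 1, by omega⟩
        rw [he1]
        simp only [List.getElem_cons_succ]
        exact List.getElem_mem _
    -- positivity of F on full segments with positive endpoints
    have hsegpos : ∀ (u v : Pt), 0 < F u → 0 < F v → ∀ p ∈ segment ℝ u v, 0 < F p := by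
      intro u v hu hv p hp
      obtain ⟨sa, sb, hsa, hsb, hsab, rfl⟩ := hp
      rw [hFcombo u v sa sb hsab]
      exact convex_pos_combo hsa hsb hsab hu hv
    have hsegzero : ∀ p ∈ segment ℝ x z, F p = 0 := by
      intro p hp
      obtain ⟨sa, sb, hsa, hsb, hsab, rfl⟩ := hp
      rw [hFcombo x z sa sb hsab, hFx, hFz]
      ring
    refine ⟨l, ?_, ?_, rfl, ?_, ?_, ?_⟩
    · exact List.nodup_cons.mpr ⟨hxnotl', hnd'⟩
    · rw [hldef, List.toFinset_cons, htf', Finset.insert_erase hx]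
    · rw [hldef, List.getLast?_cons_cons]
      exact hlast'
    · -- non-adjacent edges disjoint
      intro i j hi hj hij
      cases i with
      | zero =>
        obtain ⟨j', rfl⟩ : ∃ j', j = j' + 1 := ⟨j - 1, by omega⟩
        have hj' : j' < (pathEdges (z :: t)).length := by omega
        rw [hget0 hi, hgetS j' hj]
        have h1j : 1 ≤ j' := by omega
        obtain ⟨hm2, hm1⟩ := hend j' hj'
        have hf1 := hFt _ (hm1 h1j)
        have hf2 := hFt _ hm2
        apply Set.eq_empty_iff_forall_notMem.mpr
        rintro p ⟨hp1, hp2⟩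
        have h0 : F p = 0 := hsegzero p hp1
        have hpos : 0 < F p := hsegpos _ _ hf1 hf2 p hp2
        linarith
      | succ i' =>
        obtain ⟨j', rfl⟩ : ∃ j', j = j' + 1 := ⟨j - 1, by omega⟩
        rw [hgetS i' hi, hgetS j' hj]
        exact hNSI'.1 i' j' (by omega) (by omega) (by omega)
    · -- adjacent edges share exactly the common vertex
      intro i hi hj
      cases i with
      | zero =>
        have h0' : 0 < (pathEdges (z :: t)).length := by omega
        rw [hget0 hi, hgetS 0 hj]
        obtain ⟨he1, he2⟩ := pathEdges_get (z :: t) 0 h0'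
        set e := (pathEdges (z :: t)).get ⟨0, h0'⟩ with hedef
        have he1' : e.1 = z := by rw [he1]; simp
        have hu : e.2 ∈ t := (hend 0 h0').1
        have hfu : 0 < F e.2 := hFt _ hu
        have hseq : segOf e = segment ℝ z e.2 := by rw [segOf, he1']
        rw [hseq, he1']
        ext p
        simp only [Set.mem_inter_iff, Set.mem_singleton_iff]
        constructor
        · rintro ⟨h1, h2⟩
          have h0 : F p = 0 := hsegzero p h1
          obtain ⟨sa, sb, hsa, hsb, hsab, hp⟩ := h2
          have hFp : F p = sb * F e.2 := by
            rw [← hp, hFcombo z e.2 sa sb hsab, hFz]; ring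
          have hsb0 : sb = 0 := by
            rcases hsb.eq_or_lt with h | h
            · exact h.symm
            · exfalso; nlinarith
          have hsa1 : sa = 1 := by rw [hsb0] at hsab; linarith
          rw [← hp, hsb0, hsa1]
          simp
        · intro hpz
          rw [hpz]
          exact ⟨right_mem_segment ℝ x z, left_mem_segment ℝ z e.2⟩
      | succ i' =>
        rw [hgetS i' (by omega), hgetS (i' + 1) hj]
        exact hNSI'.2 i' (by omega) (by omega)

/-- Crossing-free Hamiltonian path from a hull vertex `x` to any prescribed `y`. -/
theorem stmt18 (X : Finset Pt) (hX : 2 ≤ X.card) (hgp : GenPos X)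
    (x : Pt) (hx : x ∈ X) (hvert : x ∉ convexHull ℝ ((X.erase x : Finset Pt) : Set Pt))
    (y : Pt) (hy : y ∈ X) (hxy : y ≠ x) :
    ∃ l : List Pt, l.Nodup ∧ l.toFinset = X ∧ l.head? = some x ∧ l.getLast? = some y ∧
      NonSelfIntersecting l :=
  main_path X.card X rfl hX hgp x hx hvert y hy hxy
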